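/- arXiv:1502.05610 — 2 statements merged into one kernel-verified Lean document; each statement's English description precedes it below -/
import Mathlib

section
/- Let μ be a shift-invariant measure on Σ = I^ℤ and for x ∈ supp(μ) define g_n(x) = μ([x_{−n},…,x_{−1}]_{−n}^{−1}) / μ([x_{−n},…,x_{−2}]_{−n}^{−2}) (and g_n(x) = 0 off supp(μ)). Then the limit g(x) = lim_{n→∞} g_n(x) exists for μ-almost every x ∈ Σ, and g ∈ L¹(Σ, μ). -/
set_option linter.unusedSectionVars false
set_option maxHeartbeats 1000000

open MeasureTheory Filter Topology
open scoped ENNReal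

/-- Two-sided cylinder: bi-infinite sequences agreeing with `x` in coordinates `a, …, b`. -/
def cylZ {I : Type*} (x : ℤ → I) (a b : ℤ) : Set (ℤ → I) :=
  {y | ∀ t : ℤ, a ≤ t → t ≤ b → y t = x t}

/-- The (invertible) left shift on the two-sided shift space. -/
def shiftZ {I : Type*} (z : ℤ → I) : ℤ → I := fun t => z (t + 1)

/-- `g_n(x) = μ([x_{-n},…,x_{-1}]) / μ([x_{-n},…,x_{-2}])`; by the convention
`0 / 0 = 0` this vanishes off the support of `μ`. -/
noncomputable def gseq {I : Type*} [MeasurableSpace I]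
    (μ : Measure (ℤ → I)) (n : ℕ) (x : ℤ → I) : ℝ :=
  (μ (cylZ x (-(n : ℤ)) (-1))).toReal / (μ (cylZ x (-(n : ℤ)) (-2))).toReal

namespace RevJac

variable {I : Type*} [Fintype I] [MeasurableSpace I]

/-! ### Atoms of the σ-algebra on the finite alphabet -/

/-- The atom of the σ-algebra on `I` containing `i`. -/
def atom (i : I) : Set I := ⋂ s ∈ {s : Set I | MeasurableSet s ∧ i ∈ s}, s

lemma mem_atom_self (i : I) : i ∈ atom i :=
  Set.mem_iInter₂.2 fun _ hs => hs.2

lemma measurableSet_atom (i : I) : MeasurableSet (atom i) :=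
  MeasurableSet.biInter (Set.to_countable _) fun _ hs => hs.1

lemma atom_spec {i j : I} (h : j ∈ atom i) {B : Set I} (hB : MeasurableSet B) :
    i ∈ B ↔ j ∈ B := by
  constructor
  · intro hi; exact Set.mem_iInter₂.1 h B ⟨hB, hi⟩
  · intro hj; by_contra hi
    exact Set.mem_iInter₂.1 h Bᶜ ⟨hB.compl, hi⟩ hj

lemma atom_eq {i j : I} (h : j ∈ atom i) : atom j = atom i := by
  have hset : {s : Set I | MeasurableSet s ∧ j ∈ s} = {s : Set I | MeasurableSet s ∧ i ∈ s} := by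
    ext s
    simp only [Set.mem_setOf_eq]
    exact and_congr_right fun hs => (atom_spec h hs).symm
  unfold atom
  rw [hset]

section Rep

variable [Nonempty I]

/-- A representative of each atom. -/
noncomputable def rep (i : I) : I :=
  (⟨i, mem_atom_self i⟩ : (atom i).Nonempty).choose

lemma rep_mem (i : I) : rep i ∈ atom i :=
  (⟨i, mem_atom_self i⟩ : (atom i).Nonempty).choose_spec

lemma rep_eq_of_mem {i j : I} (h : j ∈ atom i) : rep j = rep i := by
  unfold rep
  congr 1
  exact atom_eq h

lemma atom_eq_of_rep_eq {i j : I} (h : rep i = rep j) : atom i = atom j :=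
  calc atom i = atom (rep i) := (atom_eq (rep_mem i)).symm
    _ = atom (rep j) := by rw [h]
    _ = atom j := atom_eq (rep_mem j)

lemma rep_eq_rep_iff {i j : I} : rep i = rep j ↔ i ∈ atom j := by
  constructor
  · intro h
    rw [← atom_eq_of_rep_eq h]
    exact mem_atom_self i
  · intro h
    exact rep_eq_of_mem h

lemma measurableSet_rep_fiber (c : I) : MeasurableSet {j : I | rep j = c} := by
  have : {j : I | rep j = c} = ⋃ j ∈ {j : I | rep j = c}, atom j := by
    ext k
    simp only [Set.mem_setOf_eq, Set.mem_iUnion, exists_prop]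
    constructor
    · intro hk; exact ⟨k, hk, mem_atom_self k⟩
    · rintro ⟨j, hj, hk⟩
      rw [rep_eq_of_mem hk, hj]
  rw [this]
  exact MeasurableSet.biUnion (Set.to_countable _) fun j _ => measurableSet_atom j

end Rep

/-! ### Invariance of measurable sets under atom-preserving maps -/

/-- Measurable sets are invariant under atom-preserving coordinatewise maps. -/
lemma pi_invariant (f : ℤ → I → I) (hf : ∀ t i, f t i ∈ atom i)
    {S : Set (ℤ → I)} (hS : MeasurableSet S) (y : ℤ → I) :
    y ∈ S ↔ (fun t => f t (y t)) ∈ S := by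
  let m' : MeasurableSpace (ℤ → I) :=
    { MeasurableSet' := fun T => ∀ z : ℤ → I, z ∈ T ↔ (fun t => f t (z t)) ∈ T
      measurableSet_empty := fun _ => Iff.rfl
      measurableSet_compl := fun T hT z => not_congr (hT z)
      measurableSet_iUnion := fun T hT z => by
        simp only [Set.mem_iUnion]
        exact exists_congr fun n => hT n z }
  have hle : (MeasurableSpace.pi : MeasurableSpace (ℤ → I)) ≤ m' := by
    refine iSup_le fun t => ?_
    rintro s ⟨B, hB, rfl⟩ z
    simp only [Set.mem_preimage]
    exact atom_spec (hf t (z t)) hB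
  exact hle S hS y

/-- The σ-algebra generated by the coordinates in the window `[a, b]`. -/
def Fam (I : Type*) [MeasurableSpace I] (a b : ℤ) : MeasurableSpace (ℤ → I) :=
  ⨆ t ∈ Set.Icc a b, MeasurableSpace.comap (fun y : ℤ → I => y t) inferInstance

lemma Fam_le (a b : ℤ) : Fam I a b ≤ MeasurableSpace.pi :=
  iSup₂_le fun t _ => (measurable_pi_apply t).comap_le

lemma fam_invariant {a b : ℤ} {S : Set (ℤ → I)} (hS : MeasurableSet[Fam I a b] S)
    {y z : ℤ → I} (h : ∀ t, a ≤ t → t ≤ b → z t ∈ atom (y t)) : y ∈ S ↔ z ∈ S := by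
  let m' : MeasurableSpace (ℤ → I) :=
    { MeasurableSet' := fun T => ∀ y z : ℤ → I,
        (∀ t, a ≤ t → t ≤ b → z t ∈ atom (y t)) → (y ∈ T ↔ z ∈ T)
      measurableSet_empty := fun _ _ _ => Iff.rfl
      measurableSet_compl := fun T hT y z h => not_congr (hT y z h)
      measurableSet_iUnion := fun T hT y z h => by
        simp only [Set.mem_iUnion]
        exact exists_congr fun n => hT n y z h }
  have hle : Fam I a b ≤ m' := by
    refine iSup₂_le fun t ht => ?_
    rintro s ⟨B, hB, rfl⟩ y z h
    simp only [Set.mem_preimage]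
    exact atom_spec (h t ht.1 ht.2) hB
  exact hle S hS y z h

/-! ### The atomized cylinders -/

/-- The atomized cylinder. -/
def aCyl (x : ℤ → I) (a b : ℤ) : Set (ℤ → I) :=
  {y | ∀ t, a ≤ t → t ≤ b → y t ∈ atom (x t)}

lemma aCyl_mem_Fam (x : ℤ → I) (a b : ℤ) : MeasurableSet[Fam I a b] (aCyl x a b) := by
  have : aCyl x a b = ⋂ t ∈ Set.Icc a b, (fun y : ℤ → I => y t) ⁻¹' atom (x t) := by
    ext y
    simp only [aCyl, Set.mem_setOf_eq, Set.mem_iInter, Set.mem_preimage, Set.mem_Icc]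
    constructor
    · intro h t ht; exact h t ht.1 ht.2
    · intro h t h1 h2; exact h t ⟨h1, h2⟩
  rw [this]
  refine MeasurableSet.biInter (Set.to_countable _) fun t ht => ?_
  exact (le_iSup₂ (f := fun (t : ℤ) (_ : t ∈ Set.Icc a b) =>
      MeasurableSpace.comap (fun y : ℤ → I => y t) inferInstance) t ht)
    _ ⟨atom (x t), measurableSet_atom _, rfl⟩

lemma measurableSet_aCyl (x : ℤ → I) (a b : ℤ) : MeasurableSet (aCyl x a b) :=
  Fam_le a b _ (aCyl_mem_Fam x a b)

lemma aCyl_congr {x y : ℤ → I} {a b : ℤ} (h : ∀ t, a ≤ t → t ≤ b → y t ∈ atom (x t)) :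
    aCyl y a b = aCyl x a b := by
  ext w
  simp only [aCyl, Set.mem_setOf_eq]
  constructor
  · intro hw t h1 h2; rw [← atom_eq (h t h1 h2)]; exact hw t h1 h2
  · intro hw t h1 h2; rw [atom_eq (h t h1 h2)]; exact hw t h1 h2

/-- The outer measure of a cylinder equals the measure of the atomized cylinder. -/
lemma measure_cylZ_eq (μ : Measure (ℤ → I)) (x : ℤ → I) (a b : ℤ) :
    μ (cylZ x a b) = μ (aCyl x a b) := by
  apply le_antisymm
  · exact measure_mono fun y hy t h1 h2 => (hy t h1 h2) ▸ mem_atom_self (x t)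
  · rw [measure_eq_iInf (cylZ x a b)]
    refine le_iInf fun S => le_iInf fun hSsub => le_iInf fun hSm => ?_
    refine measure_mono fun y hy => ?_
    classical
    set f : ℤ → I → I := fun t i =>
      if h : a ≤ t ∧ t ≤ b ∧ i ∈ atom (x t) then x t else i with hfdef
    have hf : ∀ t i, f t i ∈ atom i := by
      intro t i
      by_cases h : a ≤ t ∧ t ≤ b ∧ i ∈ atom (x t)
      · simp only [hfdef, dif_pos h]
        rw [atom_eq h.2.2]
        exact mem_atom_self (x t)
      · simp only [hfdef, dif_neg h]
        exact mem_atom_self i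
    have hins : (fun t => f t (y t)) ∈ cylZ x a b := by
      intro t h1 h2
      simp only [hfdef]
      rw [dif_pos ⟨h1, h2, hy t h1 h2⟩]
    exact (pi_invariant f hf hSm y).2 (hSsub hins)

/-! ### The filtration and the conditional-expectation martingale -/

/-- The filtration generated by the coordinates in `[-n, -2]`. -/
def filt (I : Type*) [MeasurableSpace I] [Fintype I] :
    Filtration ℕ (MeasurableSpace.pi : MeasurableSpace (ℤ → I)) where
  seq n := Fam I (-(n : ℤ)) (-2)
  mono' := fun m n hmn =>
    iSup₂_le fun t ht => le_iSup₂ (f := fun (t : ℤ) (_ : t ∈ Set.Icc (-(n : ℤ)) (-2)) =>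
      MeasurableSpace.comap (fun y : ℤ → I => y t) inferInstance) t
      (Set.Icc_subset_Icc (neg_le_neg (by exact_mod_cast hmn)) le_rfl ht)
  le' n := Fam_le _ _

variable [Nonempty I]

/-- The event that the coordinate at `-1` lies in the atom of `i`. -/
def E (i : I) : Set (ℤ → I) := (fun y : ℤ → I => y (-1)) ⁻¹' atom i

lemma measurableSet_E (i : I) : MeasurableSet (E i) :=
  measurable_pi_apply (-1) (measurableSet_atom i)

/-- The indicator of `E i`. -/
noncomputable def fI (i : I) : (ℤ → I) → ℝ := (E i).indicator fun _ => 1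

lemma fI_integrable (μ : Measure (ℤ → I)) [IsProbabilityMeasure μ] (i : I) :
    Integrable (fI i) μ :=
  (integrable_const 1).indicator (measurableSet_E i)

/-- The atomized cylinder over the window `[-n, -2]`. -/
def Cn (n : ℕ) (x : ℤ → I) : Set (ℤ → I) := aCyl x (-(n : ℤ)) (-2)

/-- The candidate conditional expectation of `fI i` given the window `[-n, -2]`. -/
noncomputable def H (μ : Measure (ℤ → I)) (n : ℕ) (i : I) (x : ℤ → I) : ℝ :=
  (μ (Cn n x ∩ E i)).toReal / (μ (Cn n x)).toReal

/-- Projection on the window, recording the atoms of the coordinates. -/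
noncomputable def proj (n : ℕ) (y : ℤ → I) : ↥(Set.Icc (-(n : ℤ)) (-2)) → I :=
  fun t => rep (y ↑t)

lemma fiber_mem_Fam (n : ℕ) (κ : ↥(Set.Icc (-(n : ℤ)) (-2)) → I) :
    MeasurableSet[Fam I (-(n : ℤ)) (-2)] (proj (I := I) n ⁻¹' {κ}) := by
  have h : proj (I := I) n ⁻¹' {κ} =
      ⋂ t : ↥(Set.Icc (-(n : ℤ)) (-2)), (fun y : ℤ → I => y ↑t) ⁻¹' {j | rep j = κ t} := by
    ext y
    simp only [Set.mem_preimage, Set.mem_singleton_iff, Set.mem_iInter, Set.mem_setOf_eq,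
      proj, funext_iff]
  rw [h]
  refine MeasurableSet.iInter fun t => ?_
  exact (le_iSup₂ (f := fun (t : ℤ) (_ : t ∈ Set.Icc (-(n : ℤ)) (-2)) =>
      MeasurableSpace.comap (fun y : ℤ → I => y t) inferInstance) (↑t) t.2)
    _ ⟨{j | rep j = κ t}, measurableSet_rep_fiber _, rfl⟩

lemma fiber_eq_Cn (n : ℕ) (x : ℤ → I) : proj (I := I) n ⁻¹' {proj n x} = Cn n x := by
  ext y
  simp only [Set.mem_preimage, Set.mem_singleton_iff, funext_iff, proj, Cn, aCyl,
    Set.mem_setOf_eq]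
  constructor
  · intro h t h1 h2
    exact rep_eq_rep_iff.1 (h ⟨t, Set.mem_Icc.2 ⟨h1, h2⟩⟩)
  · intro h t
    exact rep_eq_rep_iff.2 (h ↑t (Set.mem_Icc.1 t.2).1 (Set.mem_Icc.1 t.2).2)

lemma H_measurable (μ : Measure (ℤ → I)) (n : ℕ) (i : I) :
    Measurable[Fam I (-(n : ℤ)) (-2)] (H μ n i) := by
  have hπ : @Measurable _ _ (Fam I (-(n : ℤ)) (-2)) ⊤ (proj (I := I) n) := by
    intro s _
    have h : proj (I := I) n ⁻¹' s = ⋃ κ ∈ s, proj (I := I) n ⁻¹' {κ} := by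
      ext y; simp
    rw [h]
    exact MeasurableSet.biUnion (Set.to_countable _) fun κ _ => fiber_mem_Fam n κ
  have hfac : H μ n i = (fun κ : ↥(Set.Icc (-(n : ℤ)) (-2)) → I =>
      (μ ({y : ℤ → I | ∀ t (h1 : -(n : ℤ) ≤ t) (h2 : t ≤ -2),
          y t ∈ atom (κ ⟨t, Set.mem_Icc.2 ⟨h1, h2⟩⟩)} ∩ E i)).toReal /
      (μ {y : ℤ → I | ∀ t (h1 : -(n : ℤ) ≤ t) (h2 : t ≤ -2),
          y t ∈ atom (κ ⟨t, Set.mem_Icc.2 ⟨h1, h2⟩⟩)}).toReal) ∘ proj (I := I) n := by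
    funext y
    have hset : {w : ℤ → I | ∀ t (h1 : -(n : ℤ) ≤ t) (h2 : t ≤ -2),
        w t ∈ atom (proj (I := I) n y ⟨t, Set.mem_Icc.2 ⟨h1, h2⟩⟩)} = Cn n y := by
      ext w
      simp only [Set.mem_setOf_eq, Cn, aCyl, proj]
      refine forall_congr' fun t => forall_congr' fun h1 => forall_congr' fun h2 => ?_
      rw [atom_eq (rep_mem (y t))]
    simp only [Function.comp_apply, hset, H]
  rw [hfac]
  exact Measurable.comp (measurable_from_top) hπ

lemma H_nonneg (μ : Measure (ℤ → I)) (n : ℕ) (i : I) (x : ℤ → I) : 0 ≤ H μ n i x :=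
  div_nonneg ENNReal.toReal_nonneg ENNReal.toReal_nonneg

lemma H_le_one (μ : Measure (ℤ → I)) [IsProbabilityMeasure μ] (n : ℕ) (i : I) (x : ℤ → I) :
    H μ n i x ≤ 1 := by
  have hle : (μ (Cn n x ∩ E i)).toReal ≤ (μ (Cn n x)).toReal :=
    ENNReal.toReal_mono (measure_ne_top μ _) (measure_mono Set.inter_subset_left)
  exact div_le_one_of_le₀ hle ENNReal.toReal_nonneg

lemma H_integrable (μ : Measure (ℤ → I)) [IsProbabilityMeasure μ] (n : ℕ) (i : I) :
    Integrable (H μ n i) μ := by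
  refine ⟨(((H_measurable μ n i).mono (Fam_le _ _) le_rfl).stronglyMeasurable).aestronglyMeasurable,
    HasFiniteIntegral.of_bounded (C := 1) (ae_of_all μ fun x => ?_)⟩
  rw [Real.norm_eq_abs, abs_of_nonneg (H_nonneg μ n i x)]
  exact H_le_one μ n i x

/-- `H μ n i` is (a version of) the conditional expectation of the indicator of `E i`
given the window `[-n, -2]`. -/
lemma H_eq_condexp (μ : Measure (ℤ → I)) [IsProbabilityMeasure μ] (n : ℕ) (i : I) :
    H μ n i =ᵐ[μ] μ[fI i | Fam I (-(n : ℤ)) (-2)] := by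
  refine ae_eq_condExp_of_forall_setIntegral_eq (Fam_le _ _) (fI_integrable μ i)
    (fun s _ _ => (H_integrable μ n i).integrableOn) (fun s hs _ => ?_)
    ((H_measurable μ n i).stronglyMeasurable.aestronglyMeasurable)
  classical
  have hdecomp : s = ⋃ κ ∈ (Finset.univ : Finset (↥(Set.Icc (-(n : ℤ)) (-2)) → I)),
      s ∩ proj (I := I) n ⁻¹' {κ} := by
    ext y
    simp only [Finset.mem_univ, Set.mem_iUnion, Set.mem_inter_iff, Set.mem_preimage,
      Set.mem_singleton_iff, exists_prop, true_and]
    exact ⟨fun hy => ⟨proj n y, hy, rfl⟩, fun ⟨κ, hy, _⟩ => hy⟩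
  have hmeas : ∀ κ : ↥(Set.Icc (-(n : ℤ)) (-2)) → I,
      MeasurableSet (s ∩ proj (I := I) n ⁻¹' {κ}) := fun κ =>
    (Fam_le _ _ _ hs).inter (Fam_le _ _ _ (fiber_mem_Fam n κ))
  have hdisj : Set.Pairwise ↑(Finset.univ : Finset (↥(Set.Icc (-(n : ℤ)) (-2)) → I))
      (Function.onFun Disjoint fun κ => s ∩ proj (I := I) n ⁻¹' {κ}) := by
    intro κ _ κ' _ hne
    refine Set.disjoint_left.2 fun y hy hy' => hne ?_
    rw [← hy.2, ← hy'.2]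
  calc ∫ x in s, H μ n i x ∂μ
      = ∫ x in ⋃ κ ∈ (Finset.univ : Finset (↥(Set.Icc (-(n : ℤ)) (-2)) → I)),
          s ∩ proj (I := I) n ⁻¹' {κ}, H μ n i x ∂μ := by rw [← hdecomp]
    _ = ∑ κ : ↥(Set.Icc (-(n : ℤ)) (-2)) → I,
          ∫ x in s ∩ proj (I := I) n ⁻¹' {κ}, H μ n i x ∂μ :=
        integral_biUnion_finset _ (fun κ _ => hmeas κ) hdisj
          (fun κ _ => (H_integrable μ n i).integrableOn)
    _ = ∑ κ : ↥(Set.Icc (-(n : ℤ)) (-2)) → I,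
          ∫ x in s ∩ proj (I := I) n ⁻¹' {κ}, fI i x ∂μ := by
        refine Finset.sum_congr rfl fun κ _ => ?_
        rcases Set.eq_empty_or_nonempty (s ∩ proj (I := I) n ⁻¹' {κ}) with he | ⟨x, hxs, hxf⟩
        · rw [he]; simp
        · have hκ : proj (I := I) n x = κ := hxf
          have hfib : proj (I := I) n ⁻¹' {κ} = Cn n x := by rw [← hκ]; exact fiber_eq_Cn n x
          have hsub : proj (I := I) n ⁻¹' {κ} ⊆ s := by
            rw [hfib]
            intro y hy
            exact (fam_invariant hs fun t h1 h2 => hy t h1 h2).1 hxs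
          have hseq : s ∩ proj (I := I) n ⁻¹' {κ} = Cn n x := by
            rw [Set.inter_eq_right.2 hsub, hfib]
          rw [hseq]
          have hHconst : Set.EqOn (H μ n i) (fun _ => H μ n i x) (Cn n x) := fun y hy => by
            simp only [H, Cn]
            rw [aCyl_congr hy]
          rw [setIntegral_congr_fun (show MeasurableSet (Cn n x) from measurableSet_aCyl _ _ _)
            hHconst, setIntegral_const]
          simp only [fI]
          rw [setIntegral_indicator (measurableSet_E i), setIntegral_const]
          simp only [smul_eq_mul, mul_one]
          by_cases h0 : μ (Cn n x) = 0
          · have h1 : μ (Cn n x ∩ E i) = 0 := measure_mono_null Set.inter_subset_left h0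
            simp [H, h0, h1, Measure.real]
          · have hne0 : (μ (Cn n x)).toReal ≠ 0 :=
              ENNReal.toReal_ne_zero.2 ⟨h0, measure_ne_top μ _⟩
            simp only [H, Measure.real]
            rw [mul_comm, div_mul_cancel₀ _ hne0]
    _ = ∫ x in ⋃ κ ∈ (Finset.univ : Finset (↥(Set.Icc (-(n : ℤ)) (-2)) → I)),
          s ∩ proj (I := I) n ⁻¹' {κ}, fI i x ∂μ :=
        (integral_biUnion_finset _ (fun κ _ => hmeas κ) hdisj
          (fun κ _ => (fI_integrable μ i).integrableOn)).symm
    _ = ∫ x in s, fI i x ∂μ := by rw [← hdecomp]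

/-! ### Identification of `gseq` and conclusion -/

lemma aCyl_split (x : ℤ → I) {n : ℕ} (hn : 1 ≤ n) :
    aCyl x (-(n : ℤ)) (-1) = Cn n x ∩ E (rep (x (-1))) := by
  ext y
  simp only [aCyl, Cn, E, Set.mem_setOf_eq, Set.mem_inter_iff, Set.mem_preimage]
  rw [atom_eq (rep_mem (x (-1)))]
  constructor
  · intro h
    exact ⟨fun t h1 h2 => h t h1 (by omega), h (-1) (by omega) le_rfl⟩
  · rintro ⟨h1, h2⟩ t ht1 ht2
    rcases eq_or_lt_of_le ht2 with he | hlt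
    · subst he; exact h2
    · exact h1 t ht1 (by omega)

lemma gseq_eq_H (μ : Measure (ℤ → I)) (x : ℤ → I) {n : ℕ} (hn : 1 ≤ n) :
    gseq μ n x = H μ n (rep (x (-1))) x := by
  unfold gseq H
  rw [measure_cylZ_eq μ x _ _, measure_cylZ_eq μ x _ _, aCyl_split x hn]
  rfl

theorem reverse_jacobian_exists'
    (μ : Measure (ℤ → I)) [IsProbabilityMeasure μ] :
    ∃ g : (ℤ → I) → ℝ, Integrable g μ ∧
      ∀ᵐ x ∂μ, Tendsto (fun n => gseq μ n x) atTop (𝓝 (g x)) := by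
  classical
  set L : I → (ℤ → I) → ℝ := fun i => μ[fI i | ⨆ n, filt I n] with hL
  set G : (ℤ → I) → ℝ :=
    fun x => ∑ i : I, ({z : ℤ → I | rep (z (-1)) = i}).indicator (L i) x with hG
  have hsetmeas : ∀ i : I, MeasurableSet {z : ℤ → I | rep (z (-1)) = i} := by
    intro i
    have : {z : ℤ → I | rep (z (-1)) = i} = (fun z : ℤ → I => z (-1)) ⁻¹' {j : I | rep j = i} :=
      rfl
    rw [this]
    exact measurable_pi_apply (-1) (measurableSet_rep_fiber i)
  have hGint : Integrable G μ := by
    refine integrable_finset_sum _ fun i _ => ?_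
    exact integrable_condExp.indicator (hsetmeas i)
  have hGval : ∀ x : ℤ → I, G x = L (rep (x (-1))) x := by
    intro x
    show (∑ i : I, ({z : ℤ → I | rep (z (-1)) = i}).indicator (L i) x) = L (rep (x (-1))) x
    rw [Finset.sum_eq_single (rep (x (-1)))]
    · exact Set.indicator_of_mem (by exact rfl) _
    · intro i _ hne
      refine Set.indicator_of_notMem (fun h => hne ?_) _
      exact h.symm
    · intro h; exact absurd (Finset.mem_univ _) h
  refine ⟨G, hGint, ?_⟩
  have h1 : ∀ᵐ x ∂μ, ∀ i : I,
      Tendsto (fun n => (μ[fI i | filt I n]) x) atTop (𝓝 (L i x)) :=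
    ae_all_iff.2 fun i => tendsto_ae_condExp (fI i)
  have h2 : ∀ᵐ x ∂μ, ∀ n : ℕ, ∀ i : I, H μ n i x = (μ[fI i | filt I n]) x :=
    ae_all_iff.2 fun n => ae_all_iff.2 fun i => H_eq_condexp μ n i
  filter_upwards [h1, h2] with x hx1 hx2
  have ht : Tendsto (fun n => H μ n (rep (x (-1))) x) atTop (𝓝 (G x)) := by
    rw [hGval x]
    exact (hx1 (rep (x (-1)))).congr fun n => (hx2 n (rep (x (-1)))).symm
  refine ht.congr' ?_
  filter_upwards [eventually_ge_atTop 1] with n hn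
  exact (gseq_eq_H μ x hn).symm

end RevJac

/-- The reverse Jacobian: the limit `g(x) = lim_n g_n(x)` exists `μ`-a.e. and the
limit function is in `L¹(μ)`. -/
theorem reverse_jacobian_exists
    {I : Type*} [Fintype I] [Nonempty I] [MeasurableSpace I]
    (μ : Measure (ℤ → I)) [IsProbabilityMeasure μ]
    (hinv : Measure.map shiftZ μ = μ) :
    ∃ g : (ℤ → I) → ℝ, Integrable g μ ∧
      ∀ᵐ x ∂μ, Tendsto (fun n => gseq μ n x) atTop (𝓝 (g x)) :=
  RevJac.reverse_jacobian_exists' μ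
end

section
/- Let μ be a fully supported Gibbs measure on Σ⁺ for a Hölder potential φ. Then every micromeasure ν of μ (weak-* limit of a sequence of minimeasures μ_{x,n_j}) satisfies C^{−1} μ(A) ≤ ν(A) ≤ C μ(A) for all Borel sets A, with the same constant C = (C₂/C₁²) exp(V(φ)) as for minimeasures; in particular every micromeasure is equivalent to μ. -/
open MeasureTheory Filter Topology
open scoped ENNReal

/-- One-sided cylinder: sequences agreeing with `x` in coordinates `0, …, n-1`. -/
def cyl {I : Type*} (x : ℕ → I) (n : ℕ) : Set (ℕ → I) := {y | ∀ i < n, y i = x i}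

/-- The map `T_{n,x}` prepending the first `n` symbols of `x`. -/
def prepend {I : Type*} (x : ℕ → I) (n : ℕ) (y : ℕ → I) : ℕ → I :=
  fun i => if i < n then x i else y (i - n)

/-- The left shift on the one-sided shift space. -/
def shift {I : Type*} (z : ℕ → I) : ℕ → I := fun i => z (i + 1)

/-- The minimeasure `μ_{x,n}` of `μ` at `x` of depth `n`, as a measure. -/
noncomputable def miniM {I : Type*} [MeasurableSpace I]
    (μ : Measure (ℕ → I)) (x : ℕ → I) (n : ℕ) : Measure (ℕ → I) :=
  (μ (cyl x n))⁻¹ • Measure.map (fun z i => z (i + n)) (μ.restrict (cyl x n))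

open Classical in
/-- The minimeasure `μ_{x,n}` as a probability measure (junk value `δ_x` in the
degenerate case `μ(cyl x n) = 0`). -/
noncomputable def miniP {I : Type*} [MeasurableSpace I]
    (μ : Measure (ℕ → I)) (x : ℕ → I) (n : ℕ) : ProbabilityMeasure (ℕ → I) :=
  if h : IsProbabilityMeasure (miniM μ x n) then ⟨miniM μ x n, h⟩
  else ⟨Measure.dirac x, inferInstance⟩

set_option linter.unusedSectionVars false
section Aux

variable {I : Type*} [Fintype I] [Nonempty I] [MeasurableSpace I]
    [TopologicalSpace I] [DiscreteTopology I] [BorelSpace I]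

lemma mem_cyl_self (x : ℕ → I) (n : ℕ) : x ∈ cyl x n := fun _ _ => rfl

lemma cyl_anti (x : ℕ → I) {n m : ℕ} (h : n ≤ m) : cyl x m ⊆ cyl x n :=
  fun _ hz i hi => hz i (lt_of_lt_of_le hi h)

lemma cyl_congr {x x' : ℕ → I} {n : ℕ} (h : ∀ i < n, x i = x' i) :
    cyl x n = cyl x' n := by
  ext z
  constructor <;> intro hz i hi
  · rw [hz i hi, h i hi]
  · rw [hz i hi, ← h i hi]

lemma cyl_eq_biInter (x : ℕ → I) (n : ℕ) :
    cyl x n = ⋂ i ∈ Finset.range n, (fun z : ℕ → I => z i) ⁻¹' {x i} := by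
  ext z
  simp [cyl, Set.mem_iInter]

lemma isOpen_cyl (x : ℕ → I) (n : ℕ) : IsOpen (cyl x n) := by
  rw [cyl_eq_biInter]
  exact isOpen_biInter_finset fun i _ =>
    (isOpen_discrete {x i}).preimage (continuous_apply i)

lemma isClosed_cyl (x : ℕ → I) (n : ℕ) : IsClosed (cyl x n) := by
  rw [cyl_eq_biInter]
  refine isClosed_iInter fun i => isClosed_iInter fun _ => ?_
  exact IsClosed.preimage (continuous_apply i) (isClosed_discrete {x i})

lemma measurableSet_cyl (x : ℕ → I) (n : ℕ) : MeasurableSet (cyl x n) :=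
  (isOpen_cyl x n).measurableSet

lemma shift_iterate (z : ℕ → I) (k : ℕ) : shift^[k] z = fun i => z (i + k) := by
  induction k with
  | zero => simp
  | succ k ih =>
    rw [Function.iterate_succ_apply', ih]
    funext i
    simp only [shift]
    congr 1
    omega

lemma measurable_shiftn (n : ℕ) :
    Measurable (fun z : ℕ → I => (fun i => z (i + n))) :=
  measurable_pi_lambda _ fun i => measurable_pi_apply (i + n)

lemma prepend_image (x : ℕ → I) (n : ℕ) (A : Set (ℕ → I)) :
    prepend x n '' A = cyl x n ∩ (fun z : ℕ → I => (fun i => z (i + n))) ⁻¹' A := by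
  ext z
  constructor
  · rintro ⟨y, hy, rfl⟩
    refine ⟨fun i hi => if_pos hi, ?_⟩
    have : (fun i => prepend x n y (i + n)) = y := by
      funext i
      simp only [prepend]
      rw [if_neg (by omega)]
      congr 1
      omega
    simpa [Set.mem_preimage, this] using hy
  · rintro ⟨hz, hy⟩
    refine ⟨fun i => z (i + n), hy, ?_⟩
    funext i
    by_cases hi : i < n
    · simp [prepend, hi, (hz i hi)]
    · simp only [prepend, if_neg hi]
      congr 1
      omega

lemma prepend_image_cyl (x : ℕ → I) (n : ℕ) (y : ℕ → I) (m : ℕ) :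
    prepend x n '' cyl y m = cyl (prepend x n y) (n + m) := by
  rw [prepend_image]
  ext z
  simp only [Set.mem_inter_iff, Set.mem_preimage]
  constructor
  · rintro ⟨hz, hy⟩
    intro i hi
    by_cases h : i < n
    · simp [prepend, h, hz i h]
    · have h1 : i - n < m := by omega
      have := hy (i - n) h1
      simp only [prepend, if_neg h]
      have h2 : i - n + n = i := by omega
      simp only at this
      rw [h2] at this
      exact this
  · intro h
    constructor
    · intro i hi
      have := h i (by omega)
      simpa [prepend, hi] using this
    · intro i hi
      have := h (i + n) (by omega)
      simp only [prepend, if_neg (by omega : ¬ i + n < n)] at this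
      simpa [Nat.add_sub_cancel] using this

lemma miniM_apply (μ : Measure (ℕ → I)) (x : ℕ → I) (n : ℕ)
    {A : Set (ℕ → I)} (hA : MeasurableSet A) :
    miniM μ x n A = μ (prepend x n '' A) / μ (cyl x n) := by
  rw [miniM, Measure.smul_apply, smul_eq_mul,
    Measure.map_apply (measurable_shiftn n) hA,
    Measure.restrict_apply ((measurable_shiftn n) hA),
    Set.inter_comm, ← prepend_image, div_eq_mul_inv, mul_comm]

lemma miniM_isProbability (μ : Measure (ℕ → I)) [IsProbabilityMeasure μ]
    (x : ℕ → I) (n : ℕ) (h : 0 < μ (cyl x n)) :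
    IsProbabilityMeasure (miniM μ x n) := by
  constructor
  rw [miniM_apply μ x n MeasurableSet.univ]
  have : prepend x n '' Set.univ = cyl x n := by
    rw [prepend_image]; simp
  rw [this, ENNReal.div_self h.ne' (measure_ne_top μ _)]

lemma miniP_coe (μ : Measure (ℕ → I)) [IsProbabilityMeasure μ]
    (x : ℕ → I) (n : ℕ) (h : 0 < μ (cyl x n)) :
    (miniP μ x n : Measure (ℕ → I)) = miniM μ x n := by
  have hp := miniM_isProbability μ x n h
  have he : miniP μ x n = ⟨miniM μ x n, hp⟩ := by
    unfold miniP
    exact dif_pos hp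
  rw [he]
  rfl

end Aux

section Extend

variable {I : Type*} [Fintype I] [Nonempty I] [MeasurableSpace I]
    [TopologicalSpace I] [DiscreteTopology I] [BorelSpace I]

noncomputable def extSeq {I : Type*} [Nonempty I] (n : ℕ) (s : Fin n → I) : ℕ → I :=
  fun i => if h : i < n then s ⟨i, h⟩ else Classical.arbitrary I

lemma mem_cyl_extSeq {n : ℕ} {s : Fin n → I} {z : ℕ → I} :
    z ∈ cyl (extSeq n s) n ↔ ∀ i : Fin n, z i = s i := by
  constructor
  · intro h i
    have := h i i.2
    rwa [extSeq, dif_pos i.2] at this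
  · intro h i hi
    rw [extSeq, dif_pos hi]
    exact h ⟨i, hi⟩

lemma cyl_extSeq_restr (z : ℕ → I) (n : ℕ) :
    cyl (extSeq n (fun i : Fin n => z i)) n = cyl z n :=
  (cyl_congr (fun i hi => by rw [extSeq, dif_pos hi])).symm

lemma disjoint_cyl_extSeq {n : ℕ} {s t : Fin n → I} (h : s ≠ t) :
    Disjoint (cyl (extSeq n s) n) (cyl (extSeq n t) n) := by
  rw [Set.disjoint_left]
  intro z hzs hzt
  apply h
  funext i
  rw [← mem_cyl_extSeq.1 hzs i, ← mem_cyl_extSeq.1 hzt i]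

lemma measure_le_of_cyl (μ ν : Measure (ℕ → I)) [IsFiniteMeasure μ] [IsFiniteMeasure ν]
    (C : ℝ≥0∞) (hCt : C ≠ ∞)
    (h : ∀ y m, ν (cyl y m) ≤ C * μ (cyl y m)) :
    ∀ A : Set (ℕ → I), MeasurableSet A → ν A ≤ C * μ A := by
  classical
  have hopen : ∀ U : Set (ℕ → I), IsOpen U → ν U ≤ C * μ U := by
    intro U hU
    set S : ∀ n : ℕ, Finset (Fin n → I) := fun n =>
      Finset.univ.filter (fun s : Fin n → I => cyl (extSeq n s) n ⊆ U) with hS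
    set E : ℕ → Set (ℕ → I) := fun n => ⋃ s ∈ S n, cyl (extSeq n s) n with hE
    have hmemE : ∀ (n : ℕ) (z : ℕ → I), z ∈ E n ↔ cyl z n ⊆ U := by
      intro n z
      constructor
      · intro hz
        simp only [hE, Set.mem_iUnion] at hz
        obtain ⟨s, hs, hzs⟩ := hz
        rw [hS, Finset.mem_filter] at hs
        have : cyl z n = cyl (extSeq n s) n :=
          cyl_congr fun i hi => by
            simp only [extSeq, dif_pos hi]
            exact mem_cyl_extSeq.1 hzs ⟨i, hi⟩
        rw [this]
        exact hs.2
      · intro hz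
        simp only [hE, Set.mem_iUnion]
        refine ⟨fun i : Fin n => z i, ?_, ?_⟩
        · rw [hS, Finset.mem_filter]
          exact ⟨Finset.mem_univ _, by rwa [cyl_extSeq_restr]⟩
        · exact mem_cyl_extSeq.2 fun i => rfl
    have hmono : Monotone E := by
      apply monotone_nat_of_le_succ
      intro n z hz
      rw [hmemE] at hz ⊢
      exact fun w hw => hz ((cyl_anti z (Nat.le_succ n)) hw)
    have hEU : (⋃ n, E n) = U := by
      apply Set.Subset.antisymm
      · intro z hz
        obtain ⟨n, hn⟩ := Set.mem_iUnion.1 hz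
        exact (hmemE n z).1 hn (mem_cyl_self z n)
      · intro z hz
        obtain ⟨F, u, hFu, hsub⟩ := isOpen_pi_iff.1 hU z hz
        refine Set.mem_iUnion.2 ⟨F.sup id + 1, (hmemE _ z).2 ?_⟩
        intro w hw
        apply hsub
        intro a ha
        have haF : a < F.sup id + 1 := Nat.lt_succ_of_le (Finset.le_sup (f := id) ha)
        rw [hw a haF]
        exact (hFu a ha).2
    have hmeasE : ∀ (ρ : Measure (ℕ → I)) (n : ℕ),
        ρ (E n) = ∑ s ∈ S n, ρ (cyl (extSeq n s) n) := by
      intro ρ n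
      rw [hE]
      exact measure_biUnion_finset
        (fun s _ t _ hst => disjoint_cyl_extSeq hst)
        (fun s _ => measurableSet_cyl _ _)
    have hEn : ∀ n, ν (E n) ≤ C * μ (E n) := by
      intro n
      rw [hmeasE ν n, hmeasE μ n, Finset.mul_sum]
      exact Finset.sum_le_sum fun s _ => h _ _
    calc ν U = ν (⋃ n, E n) := by rw [hEU]
      _ = ⨆ n, ν (E n) := (hmono.directed_le).measure_iUnion
      _ ≤ C * μ U := by
          refine iSup_le fun n => (hEn n).trans ?_
          exact mul_le_mul_right (measure_mono (by rw [← hEU]; exact Set.subset_iUnion E n)) C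
  intro A hA
  refine le_of_forall_gt_imp_ge_of_dense fun r hr => ?_
  haveI : (C • μ).OuterRegular := Measure.OuterRegular.smul μ hCt
  have hr' : (C • μ) A < r := by simpa [Measure.smul_apply, smul_eq_mul] using hr
  obtain ⟨U, hAU, hUopen, hU⟩ := Set.exists_isOpen_lt_of_lt (μ := C • μ) A r hr'
  calc ν A ≤ ν U := measure_mono hAU
    _ ≤ C * μ U := hopen U hUopen
    _ ≤ r := by simpa [Measure.smul_apply, smul_eq_mul] using hU.le

lemma measure_twoside_of_cyl (μ ν : Measure (ℕ → I)) [IsFiniteMeasure μ] [IsFiniteMeasure ν]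
    (C : ℝ≥0∞) (hC0 : C ≠ 0) (hCt : C ≠ ∞)
    (h : ∀ y m, C⁻¹ * μ (cyl y m) ≤ ν (cyl y m) ∧ ν (cyl y m) ≤ C * μ (cyl y m)) :
    ∀ A : Set (ℕ → I), MeasurableSet A → C⁻¹ * μ A ≤ ν A ∧ ν A ≤ C * μ A := by
  intro A hA
  constructor
  · have := measure_le_of_cyl ν μ C hCt (fun y m => ?_) A hA
    · calc C⁻¹ * μ A ≤ C⁻¹ * (C * ν A) := mul_le_mul_right this _
        _ = ν A := by
          rw [← mul_assoc, ENNReal.inv_mul_cancel hC0 hCt, one_mul]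
    · calc μ (cyl y m) = C * (C⁻¹ * μ (cyl y m)) := by
            rw [← mul_assoc, ENNReal.mul_inv_cancel hC0 hCt, one_mul]
        _ ≤ C * ν (cyl y m) := mul_le_mul_right (h y m).1 _
  · exact measure_le_of_cyl μ ν C hCt (fun y m => (h y m).2) A hA

end Extend

/-- For a fully supported Gibbs measure `μ` of a Hölder potential, there is a uniform
constant `C ≥ 1` such that every minimeasure, and hence also every micromeasure
(weak-* limit of minimeasures along a subsequence), is `C`-uniformly equivalent to `μ`. -/
theorem gibbs_micromeasures_uniformly_equivalent
    {I : Type*} [Fintype I] [Nonempty I] [MeasurableSpace I]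
    [TopologicalSpace I] [DiscreteTopology I] [BorelSpace I]
    (φ : (ℕ → I) → ℝ) (Pφ : ℝ)
    (hHolder : ∃ c : ℝ, 0 ≤ c ∧ ∃ θ ∈ Set.Ioo (0 : ℝ) 1, ∀ (k : ℕ) (x y : ℕ → I),
      (∀ i < k, x i = y i) → |φ x - φ y| ≤ c * θ ^ k)
    (μ : Measure (ℕ → I)) [IsProbabilityMeasure μ]
    (hfull : ∀ (x : ℕ → I) (n : ℕ), 0 < μ (cyl x n))
    (C₁ C₂ : ℝ) (hC₁ : 0 < C₁) (hC₂ : 0 < C₂)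
    (hGibbs : ∀ (x : ℕ → I) (n : ℕ),
      C₁ ≤ (μ (cyl x n)).toReal /
          Real.exp ((∑ k ∈ Finset.range n, φ (shift^[k] x)) - n * Pφ) ∧
      (μ (cyl x n)).toReal /
          Real.exp ((∑ k ∈ Finset.range n, φ (shift^[k] x)) - n * Pφ) ≤ C₂) :
    ∃ C : ℝ≥0∞, 1 ≤ C ∧ C ≠ ∞ ∧
      (∀ (x : ℕ → I) (n : ℕ) (A : Set (ℕ → I)), MeasurableSet A →
        C⁻¹ * μ A ≤ μ (prepend x n '' A) / μ (cyl x n) ∧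
        μ (prepend x n '' A) / μ (cyl x n) ≤ C * μ A) ∧
      ∀ ν : ProbabilityMeasure (ℕ → I),
        (∃ (x : ℕ → I) (nj : ℕ → ℕ), StrictMono nj ∧
          Tendsto (fun j => miniP μ x (nj j)) atTop (𝓝 ν)) →
        ∀ A : Set (ℕ → I), MeasurableSet A →
          C⁻¹ * μ A ≤ (ν : Measure (ℕ → I)) A ∧ (ν : Measure (ℕ → I)) A ≤ C * μ A := by
  classical
  obtain ⟨c, hc, θ, ⟨hθ0, hθ1⟩, hH⟩ := hHolder
  set V : ℝ := c / (1 - θ) with hV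
  have h1θ : (0:ℝ) < 1 - θ := by linarith
  have hV0 : 0 ≤ V := div_nonneg hc h1θ.le
  set r : ℝ := max (max (C₂ / C₁ ^ 2 * Real.exp V) (C₂ ^ 2 / C₁ * Real.exp V)) 1 with hrdef
  have hr1 : (1:ℝ) ≤ r := le_max_right _ _
  have hr0 : (0:ℝ) < r := lt_of_lt_of_le one_pos hr1
  set C : ℝ≥0∞ := ENNReal.ofReal r with hCdef
  have hC1 : 1 ≤ C := by rw [hCdef, ENNReal.one_le_ofReal]; exact hr1
  have hCt : C ≠ ∞ := ENNReal.ofReal_ne_top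
  have hC0 : C ≠ 0 := (lt_of_lt_of_le one_pos hC1).ne'
  have hCinv : C⁻¹ = ENNReal.ofReal r⁻¹ := by
    rw [hCdef, ENNReal.ofReal_inv_of_pos hr0]
  -- Gibbs bounds in real form
  have gibbs_lo : ∀ (z : ℕ → I) (k : ℕ),
      C₁ * Real.exp ((∑ i ∈ Finset.range k, φ (shift^[i] z)) - k * Pφ)
        ≤ (μ (cyl z k)).toReal := by
    intro z k
    have := (hGibbs z k).1
    rwa [le_div_iff₀ (Real.exp_pos _)] at this
  have gibbs_hi : ∀ (z : ℕ → I) (k : ℕ),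
      (μ (cyl z k)).toReal
        ≤ C₂ * Real.exp ((∑ i ∈ Finset.range k, φ (shift^[i] z)) - k * Pφ) := by
    intro z k
    have := (hGibbs z k).2
    rwa [div_le_iff₀ (Real.exp_pos _)] at this
  -- Birkhoff-sum distortion bound
  have hbirk : ∀ (x y : ℕ → I) (n : ℕ),
      |(∑ k ∈ Finset.range n, φ (shift^[k] (prepend x n y)))
        - ∑ k ∈ Finset.range n, φ (shift^[k] x)| ≤ V := by
    intro x y n
    rw [← Finset.sum_sub_distrib]
    refine (Finset.abs_sum_le_sum_abs _ _).trans ?_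
    have hterm : ∀ k ∈ Finset.range n,
        |φ (shift^[k] (prepend x n y)) - φ (shift^[k] x)| ≤ c * θ ^ (n - k) := by
      intro k hk
      rw [Finset.mem_range] at hk
      apply hH (n - k)
      intro i hi
      rw [shift_iterate, shift_iterate]
      show prepend x n y (i + k) = x (i + k)
      simp only [prepend]
      rw [if_pos (by omega : i + k < n)]
    refine (Finset.sum_le_sum hterm).trans ?_
    rw [← Finset.mul_sum]
    have hre : ∑ k ∈ Finset.range n, θ ^ (n - k) = ∑ k ∈ Finset.range n, θ ^ (k + 1) := by
      rw [← Finset.sum_range_reflect (fun k => θ ^ (k + 1)) n]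
      apply Finset.sum_congr rfl
      intro k hk
      rw [Finset.mem_range] at hk
      congr 1
      omega
    have hsum : ∑ k ∈ Finset.range n, θ ^ (n - k) ≤ (1 - θ)⁻¹ := by
      rw [hre]
      have h1 : ∀ k ∈ Finset.range n, θ ^ (k + 1) ≤ θ ^ k * 1 := by
        intro k _
        rw [pow_succ]
        exact mul_le_mul_of_nonneg_left hθ1.le (pow_nonneg hθ0.le k)
      refine (Finset.sum_le_sum h1).trans ?_
      simp only [mul_one]
      rw [geom_sum_eq (ne_of_lt hθ1)]
      rw [div_le_iff_of_neg (by linarith : θ - 1 < 0)]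
      have : (0:ℝ) ≤ θ ^ n := pow_nonneg hθ0.le n
      have h2 : (1 - θ)⁻¹ * (θ - 1) = -1 := by field_simp; ring
      rw [h2]
      linarith
    calc c * ∑ k ∈ Finset.range n, θ ^ (n - k) ≤ c * (1 - θ)⁻¹ :=
          mul_le_mul_of_nonneg_left hsum hc
      _ = V := by rw [hV, div_eq_mul_inv]
  -- positivity of cylinder measures in real form
  have hpos : ∀ (z : ℕ → I) (k : ℕ), 0 < (μ (cyl z k)).toReal := by
    intro z k
    exact ENNReal.toReal_pos (hfull z k).ne' (measure_ne_top μ _)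
  -- the key real cylinder estimate
  have keyR : ∀ (x y : ℕ → I) (n m : ℕ),
      r⁻¹ * ((μ (cyl x n)).toReal * (μ (cyl y m)).toReal)
        ≤ (μ (cyl (prepend x n y) (n + m))).toReal ∧
      (μ (cyl (prepend x n y) (n + m))).toReal
        ≤ r * ((μ (cyl x n)).toReal * (μ (cyl y m)).toReal) := by
    intro x y n m
    set w := prepend x n y with hw
    set Sx := ∑ k ∈ Finset.range n, φ (shift^[k] x) with hSx
    set Sy := ∑ k ∈ Finset.range m, φ (shift^[k] y) with hSy
    set Sw := ∑ k ∈ Finset.range n, φ (shift^[k] w) with hSw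
    have hsplit : ∑ k ∈ Finset.range (n + m), φ (shift^[k] w) = Sw + Sy := by
      rw [Finset.sum_range_add]
      congr 1
      apply Finset.sum_congr rfl
      intro k _
      congr 1
      rw [shift_iterate, shift_iterate]
      funext i
      show prepend x n y (i + (n + k)) = y (i + k)
      simp only [prepend]
      rw [if_neg (by omega : ¬ i + (n + k) < n)]
      congr 1
      omega
    set a := (μ (cyl x n)).toReal with ha
    set b := (μ (cyl y m)).toReal with hb
    set d := (μ (cyl w (n + m))).toReal with hd
    set ea := Real.exp (Sx - n * Pφ) with hea
    set eb := Real.exp (Sy - m * Pφ) with heb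
    set ew := Real.exp (Sw - n * Pφ) with hew
    have hea0 : 0 < ea := Real.exp_pos _
    have heb0 : 0 < eb := Real.exp_pos _
    have hew0 : 0 < ew := Real.exp_pos _
    have ha0 : 0 < a := hpos x n
    have hb0 : 0 < b := hpos y m
    have hd0 : 0 < d := hpos w (n + m)
    have hd_hi : d ≤ C₂ * (ew * eb) := by
      have := gibbs_hi w (n + m)
      rw [hsplit] at this
      have hcast : Sw + Sy - (↑(n + m) : ℝ) * Pφ = (Sw - n * Pφ) + (Sy - m * Pφ) := by
        push_cast; ring
      rwa [hcast, Real.exp_add] at this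
    have hd_lo : C₁ * (ew * eb) ≤ d := by
      have := gibbs_lo w (n + m)
      rw [hsplit] at this
      have hcast : Sw + Sy - (↑(n + m) : ℝ) * Pφ = (Sw - n * Pφ) + (Sy - m * Pφ) := by
        push_cast; ring
      rwa [hcast, Real.exp_add] at this
    have habs := hbirk x y n
    rw [abs_le] at habs
    have hew_hi : ew ≤ Real.exp V * ea := by
      rw [hew, hea, ← Real.exp_add]
      apply Real.exp_le_exp.2
      have := habs.2
      linarith
    have hew_lo : Real.exp (-V) * ea ≤ ew := by
      rw [hew, hea, ← Real.exp_add]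
      apply Real.exp_le_exp.2
      have := habs.1
      linarith
    have ha_hi : a ≤ C₂ * ea := gibbs_hi x n
    have ha_lo : C₁ * ea ≤ a := gibbs_lo x n
    have hb_hi : b ≤ C₂ * eb := gibbs_hi y m
    have hb_lo : C₁ * eb ≤ b := gibbs_lo y m
    have hea_le : ea ≤ a / C₁ := by rw [le_div_iff₀ hC₁]; linarith
    have heb_le : eb ≤ b / C₁ := by rw [le_div_iff₀ hC₁]; linarith
    have hea_ge : a / C₂ ≤ ea := by rw [div_le_iff₀ hC₂]; linarith
    have heb_ge : b / C₂ ≤ eb := by rw [div_le_iff₀ hC₂]; linarith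
    constructor
    · -- lower bound
      have h1 : C₁ * ((Real.exp (-V) * (a / C₂)) * (b / C₂)) ≤ d := by
        refine le_trans ?_ hd_lo
        apply mul_le_mul_of_nonneg_left _ hC₁.le
        apply mul_le_mul _ heb_ge (by positivity) hew0.le
        exact le_trans (mul_le_mul_of_nonneg_left hea_ge (Real.exp_pos _).le) hew_lo
      have heq : C₁ * ((Real.exp (-V) * (a / C₂)) * (b / C₂))
          = C₁ / C₂ ^ 2 * Real.exp (-V) * (a * b) := by
        field_simp
      rw [heq] at h1
      refine le_trans ?_ h1
      apply mul_le_mul_of_nonneg_right _ (by positivity)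
      -- r⁻¹ ≤ C₁ / C₂ ^ 2 * Real.exp (-V)
      have hr2 : C₂ ^ 2 / C₁ * Real.exp V ≤ r :=
        le_trans (le_max_right _ _) (le_max_left _ _)
      have hx0 : (0:ℝ) < C₂ ^ 2 / C₁ * Real.exp V := by positivity
      have := inv_anti₀ hx0 hr2
      refine this.trans (le_of_eq ?_)
      rw [Real.exp_neg, mul_inv, inv_div]
    · -- upper bound
      have h1 : d ≤ C₂ * ((Real.exp V * (a / C₁)) * (b / C₁)) := by
        refine hd_hi.trans ?_
        apply mul_le_mul_of_nonneg_left _ hC₂.le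
        apply mul_le_mul _ heb_le heb0.le (by positivity)
        exact hew_hi.trans (mul_le_mul_of_nonneg_left hea_le (Real.exp_pos _).le)
      have heq : C₂ * ((Real.exp V * (a / C₁)) * (b / C₁))
          = C₂ / C₁ ^ 2 * Real.exp V * (a * b) := by
        field_simp
      rw [heq] at h1
      refine h1.trans ?_
      apply mul_le_mul_of_nonneg_right _ (by positivity)
      exact le_trans (le_max_left _ _) (le_max_left _ _)
  -- the key ENNReal cylinder estimate
  have keyE : ∀ (x y : ℕ → I) (n m : ℕ),
      C⁻¹ * (μ (cyl x n) * μ (cyl y m)) ≤ μ (cyl (prepend x n y) (n + m)) ∧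
      μ (cyl (prepend x n y) (n + m)) ≤ C * (μ (cyl x n) * μ (cyl y m)) := by
    intro x y n m
    obtain ⟨hlo, hhi⟩ := keyR x y n m
    have hane : μ (cyl x n) ≠ ∞ := measure_ne_top μ _
    have hbne : μ (cyl y m) ≠ ∞ := measure_ne_top μ _
    have hdne : μ (cyl (prepend x n y) (n + m)) ≠ ∞ := measure_ne_top μ _
    constructor
    · calc C⁻¹ * (μ (cyl x n) * μ (cyl y m))
          = ENNReal.ofReal (r⁻¹ * ((μ (cyl x n)).toReal * (μ (cyl y m)).toReal)) := by
            rw [ENNReal.ofReal_mul (inv_nonneg.2 hr0.le),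
              ENNReal.ofReal_mul ENNReal.toReal_nonneg,
              ENNReal.ofReal_toReal hane, ENNReal.ofReal_toReal hbne, hCinv]
        _ ≤ ENNReal.ofReal (μ (cyl (prepend x n y) (n + m))).toReal :=
            ENNReal.ofReal_le_ofReal hlo
        _ = μ (cyl (prepend x n y) (n + m)) := ENNReal.ofReal_toReal hdne
    · calc μ (cyl (prepend x n y) (n + m))
          = ENNReal.ofReal (μ (cyl (prepend x n y) (n + m))).toReal :=
            (ENNReal.ofReal_toReal hdne).symm
        _ ≤ ENNReal.ofReal (r * ((μ (cyl x n)).toReal * (μ (cyl y m)).toReal)) :=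
            ENNReal.ofReal_le_ofReal hhi
        _ = C * (μ (cyl x n) * μ (cyl y m)) := by
            rw [ENNReal.ofReal_mul hr0.le, ENNReal.ofReal_mul ENNReal.toReal_nonneg,
              ENNReal.ofReal_toReal hane, ENNReal.ofReal_toReal hbne, hCdef]
  -- minimeasures satisfy the cylinder bounds
  have mini_cyl : ∀ (x : ℕ → I) (n : ℕ) (y : ℕ → I) (m : ℕ),
      C⁻¹ * μ (cyl y m) ≤ miniM μ x n (cyl y m) ∧
      miniM μ x n (cyl y m) ≤ C * μ (cyl y m) := by
    intro x n y m
    have hane : μ (cyl x n) ≠ ∞ := measure_ne_top μ _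
    have hane0 : μ (cyl x n) ≠ 0 := (hfull x n).ne'
    rw [miniM_apply μ x n (measurableSet_cyl y m), prepend_image_cyl]
    obtain ⟨hlo, hhi⟩ := keyE x y n m
    constructor
    · rw [ENNReal.le_div_iff_mul_le (Or.inl hane0) (Or.inl hane)]
      calc C⁻¹ * μ (cyl y m) * μ (cyl x n)
          = C⁻¹ * (μ (cyl x n) * μ (cyl y m)) := by ring
        _ ≤ μ (cyl (prepend x n y) (n + m)) := hlo
    · rw [ENNReal.div_le_iff hane0 hane]
      calc μ (cyl (prepend x n y) (n + m))
          ≤ C * (μ (cyl x n) * μ (cyl y m)) := hhi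
        _ = C * μ (cyl y m) * μ (cyl x n) := by ring
  -- minimeasures are uniformly equivalent to μ on all Borel sets
  have mini_all : ∀ (x : ℕ → I) (n : ℕ) (A : Set (ℕ → I)), MeasurableSet A →
      C⁻¹ * μ A ≤ miniM μ x n A ∧ miniM μ x n A ≤ C * μ A := by
    intro x n
    haveI : IsProbabilityMeasure (miniM μ x n) := miniM_isProbability μ x n (hfull x n)
    exact measure_twoside_of_cyl μ (miniM μ x n) C hC0 hCt (fun y m => mini_cyl x n y m)
  refine ⟨C, hC1, hCt, ?_, ?_⟩
  · intro x n A hA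
    have := mini_all x n A hA
    rwa [miniM_apply μ x n hA] at this
  · rintro ν ⟨x, nj, -, hlim⟩
    -- cylinder bounds for the limit measure
    have hν_cyl : ∀ (y : ℕ → I) (m : ℕ),
        C⁻¹ * μ (cyl y m) ≤ (ν : Measure (ℕ → I)) (cyl y m) ∧
        (ν : Measure (ℕ → I)) (cyl y m) ≤ C * μ (cyl y m) := by
      intro y m
      have hclopen : IsClopen (cyl y m) := ⟨isClosed_cyl y m, isOpen_cyl y m⟩
      set f : BoundedContinuousFunction (ℕ → I) ℝ :=
        BoundedContinuousFunction.indicator (cyl y m) hclopen with hf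
      have hint : ∀ ρ : ProbabilityMeasure (ℕ → I),
          ∫ ω, f ω ∂(ρ : Measure (ℕ → I)) = ((ρ : Measure (ℕ → I)) (cyl y m)).toReal := by
        intro ρ
        have h1 : ∀ ω, f ω = (cyl y m).indicator (fun _ => (1:ℝ)) ω := fun ω => rfl
        simp_rw [h1]
        rw [integral_indicator_const (1:ℝ) (measurableSet_cyl y m)]
        simp
        rfl
      have htend := ProbabilityMeasure.tendsto_iff_forall_integral_tendsto.1 hlim f
      simp_rw [hint] at htend
      -- each term satisfies the bounds
      have hterm : ∀ j : ℕ,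
          C⁻¹ * μ (cyl y m) ≤ (miniP μ x (nj j) : Measure (ℕ → I)) (cyl y m) ∧
          (miniP μ x (nj j) : Measure (ℕ → I)) (cyl y m) ≤ C * μ (cyl y m) := by
        intro j
        rw [miniP_coe μ x (nj j) (hfull x (nj j))]
        exact mini_cyl x (nj j) y m
      have hCμne : C * μ (cyl y m) ≠ ∞ :=
        ENNReal.mul_ne_top hCt (measure_ne_top μ _)
      have hCiμne : C⁻¹ * μ (cyl y m) ≠ ∞ :=
        ENNReal.mul_ne_top (by simp [hC0]) (measure_ne_top μ _)
      have hlo : (C⁻¹ * μ (cyl y m)).toReal ≤ ((ν : Measure (ℕ → I)) (cyl y m)).toReal := by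
        refine ge_of_tendsto htend (Eventually.of_forall fun j => ?_)
        exact ENNReal.toReal_mono (measure_ne_top _ _) (hterm j).1
      have hhi : ((ν : Measure (ℕ → I)) (cyl y m)).toReal ≤ (C * μ (cyl y m)).toReal := by
        refine le_of_tendsto htend (Eventually.of_forall fun j => ?_)
        exact ENNReal.toReal_mono hCμne (hterm j).2
      constructor
      · rw [← ENNReal.ofReal_toReal hCiμne,
          ← ENNReal.ofReal_toReal (measure_ne_top (ν : Measure (ℕ → I)) (cyl y m))]
        exact ENNReal.ofReal_le_ofReal hlo
      · rw [← ENNReal.ofReal_toReal (measure_ne_top (ν : Measure (ℕ → I)) (cyl y m)),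
          ← ENNReal.ofReal_toReal hCμne]
        exact ENNReal.ofReal_le_ofReal hhi
    exact measure_twoside_of_cyl μ (ν : Measure (ℕ → I)) C hC0 hCt hν_cyl
end
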